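/- For every finite-dimensional right A-module M and every weight δ ∈ ℤ^n one has f_M(δ) ≤ hom(δ,M) and f̌_M(−δ) ≤ e(δ,M). Dually, for every δ̌ ∈ ℤ^n one has f̌_M(δ̌) ≤ hom(M,δ̌) and f_M(−δ̌) ≤ ě(M,δ̌). -/

import Mathlib

/-!  Common setup: tropical F-polynomials and general presentations
for a finite-dimensional basic algebra `A` over `k`, following Fei,
"Tropical F-polynomials and general presentations".
All modules are *right* `A`-modules, encoded as left `Aᵐᵒᵖ`-modules. -/

namespace TropGP

open Module MulOpposite

section Defs

variable (k : Type) [Field k]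
variable (A : Type) [Ring A] [Algebra k A]

/-- The right regular `A`-module structure on `A` is compatible with the `k`-action. -/
instance instTowerOpA : IsScalarTower k Aᵐᵒᵖ A :=
  ⟨fun c b x => by
    rw [MulOpposite.smul_eq_mul_unop, MulOpposite.smul_eq_mul_unop, MulOpposite.unop_smul,
      Algebra.mul_smul_comm]⟩

/-- Shortcut instance: scalars of `k` commute with the right `A`-action. -/
instance (priority := 5000) instSMulCommOpK (M : Type) [AddCommGroup M] [Module k M]
    [Module Aᵐᵒᵖ M] [IsScalarTower k Aᵐᵒᵖ M] : SMulCommClass Aᵐᵒᵖ k M :=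
  IsScalarTower.to_smulCommClass'

variable {n : ℕ} (e : Fin n → A)

/-- Pairing of a weight vector with an integral (dimension) vector. -/
def pz (δ β : Fin n → ℤ) : ℤ := ∑ i, δ i * β i

/-- Pairing of an integral weight vector with a real vector. -/
def przr (δ : Fin n → ℤ) (γ : Fin n → ℝ) : ℝ := ∑ i, (δ i : ℝ) * γ i

/-- Pairing of two real vectors. -/
def prr (δ γ : Fin n → ℝ) : ℝ := ∑ i, δ i * γ i

variable (M : Type) [AddCommGroup M] [Module k M] [Module Aᵐᵒᵖ M] [IsScalarTower k Aᵐᵒᵖ M]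

/-- Right multiplication by `e i`, as a `k`-linear endomorphism of a right `A`-module. -/
noncomputable def rmul (i : Fin n) : M →ₗ[k] M where
  toFun x := op (e i) • x
  map_add' x y := smul_add _ x y
  map_smul' c x := smul_comm _ c x

/-- The dimension vector: `i ↦ dim_k (M eᵢ)`. -/
noncomputable def dimVec : Fin n → ℤ :=
  fun i => (finrank k (LinearMap.range (rmul k A e M i)) : ℤ)

/-- The real dimension vector. -/
noncomputable def dimVecR : Fin n → ℝ :=
  fun i => (finrank k (LinearMap.range (rmul k A e M i)) : ℝ)

/-- The tropical F-polynomial: `f_M(δ) = max { δ(dim L) : L ⊆ M }`. -/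
noncomputable def tropF (δ : Fin n → ℤ) : ℤ :=
  sSup (Set.range fun L : Submodule Aᵐᵒᵖ M => pz δ (dimVec k A e L))

/-- The dual tropical F-polynomial: `f̌_M(δ) = max { δ(dim N) : M ↠ N }`. -/
noncomputable def tropCheck (δ : Fin n → ℤ) : ℤ :=
  sSup (Set.range fun L : Submodule Aᵐᵒᵖ M => pz δ (dimVec k A e (M ⧸ L)))

/-- The Newton polytope of `M`: the convex hull of dimension vectors of submodules. -/
noncomputable def newton : Set (Fin n → ℝ) :=
  convexHull ℝ {x | ∃ L : Submodule Aᵐᵒᵖ M, x = dimVecR k A e L}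

/-- The dual Newton polytope of `M`: convex hull of dimension vectors of quotients. -/
noncomputable def newtonCheck : Set (Fin n → ℝ) :=
  convexHull ℝ {x | ∃ L : Submodule Aᵐᵒᵖ M, x = dimVecR k A e (M ⧸ L)}

/-- King's `δ`-semistability. -/
def IsSemistable (δ : Fin n → ℤ) : Prop :=
  pz δ (dimVec k A e M) = 0 ∧ ∀ L : Submodule Aᵐᵒᵖ M, pz δ (dimVec k A e L) ≤ 0

/-- `δ`-semistability for a real weight. -/
def IsSemistableR (δ : Fin n → ℝ) : Prop :=
  prr δ (dimVecR k A e M) = 0 ∧ ∀ L : Submodule Aᵐᵒᵖ M, prr δ (dimVecR k A e L) ≤ 0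

/-- `δ`-stability. -/
def IsStable (δ : Fin n → ℤ) : Prop :=
  pz δ (dimVec k A e M) = 0 ∧
    ∀ L : Submodule Aᵐᵒᵖ M, L ≠ ⊥ → L ≠ ⊤ → pz δ (dimVec k A e L) < 0

section HomE

variable {P Q : Type} [AddCommGroup P] [Module Aᵐᵒᵖ P] [AddCommGroup Q] [Module Aᵐᵒᵖ Q]

/-- The `k`-linear map `Hom_A(Q, M) → Hom_A(P, M)` induced by `d : P → Q`. -/
noncomputable def homMap (d : P →ₗ[Aᵐᵒᵖ] Q) : (Q →ₗ[Aᵐᵒᵖ] M) →ₗ[k] (P →ₗ[Aᵐᵒᵖ] M) where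
  toFun f := f ∘ₗ d
  map_add' f g := LinearMap.add_comp _ _ _
  map_smul' c f := LinearMap.smul_comp _ _ _

/-- `dim_k Hom(d, M)`: the kernel of the induced map. -/
noncomputable def homNum (d : P →ₗ[Aᵐᵒᵖ] Q) : ℕ :=
  finrank k (LinearMap.ker (homMap k A M d))

/-- `dim_k E(d, M)`: the cokernel of the induced map. -/
noncomputable def eNum (d : P →ₗ[Aᵐᵒᵖ] Q) : ℕ :=
  finrank k ((P →ₗ[Aᵐᵒᵖ] M) ⧸ LinearMap.range (homMap k A M d))

end HomE

/-- The indecomposable projective right module `e i · A`. -/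
abbrev projP (i : Fin n) : Submodule Aᵐᵒᵖ A := Submodule.span Aᵐᵒᵖ {e i}

/-- The projective right module `P(β) = ⊕ᵢ (eᵢA)^{β i}`. -/
abbrev PP (β : Fin n → ℕ) : Type := Π i : Fin n, Fin (β i) → projP A e i

/-- The weight condition `β₊ - β₋ = δ`. -/
def HasWt (βm βp : Fin n → ℕ) (δ : Fin n → ℤ) : Prop :=
  ∀ i, (βp i : ℤ) - (βm i : ℤ) = δ i

/-- The cokernel of a projective presentation. -/
abbrev Coker {βm βp : Fin n → ℕ} (d : PP A e βm →ₗ[Aᵐᵒᵖ] PP A e βp) : Type :=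
  PP A e βp ⧸ LinearMap.range d

/-- `hom(δ, M)`: min of `dim_k Hom(d,M)` over projective presentations `d` of weight `δ`. -/
noncomputable def homWt (δ : Fin n → ℤ) : ℕ :=
  sInf {m : ℕ | ∃ (βm βp : Fin n → ℕ) (d : PP A e βm →ₗ[Aᵐᵒᵖ] PP A e βp),
    HasWt βm βp δ ∧ m = homNum k A M d}

/-- `e(δ, M)`: min of `dim_k E(d,M)` over projective presentations `d` of weight `δ`. -/
noncomputable def eWt (δ : Fin n → ℤ) : ℕ :=
  sInf {m : ℕ | ∃ (βm βp : Fin n → ℕ) (d : PP A e βm →ₗ[Aᵐᵒᵖ] PP A e βp),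
    HasWt βm βp δ ∧ m = eNum k A M d}

/-- The indecomposable left module `A · e i`. -/
abbrev projL (i : Fin n) : Submodule A A := Submodule.span A {e i}

section DualMod

variable (V : Type) [AddCommGroup V] [Module k V] [Module A V] [IsScalarTower k A V]

/-- Left multiplication by `a` as a `k`-linear endomorphism of a left module. -/
noncomputable def lact (a : A) : V →ₗ[k] V where
  toFun x := a • x
  map_add' x y := smul_add a x y
  map_smul' c x := smul_comm a c x

/-- The right `A`-action on the `k`-dual of a left `A`-module. -/
noncomputable instance dualSMul : SMul Aᵐᵒᵖ (V →ₗ[k] k) :=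
  ⟨fun a f => f ∘ₗ lact k A V a.unop⟩

@[simp] lemma dual_smul_apply (a : Aᵐᵒᵖ) (f : V →ₗ[k] k) (x : V) :
    (a • f) x = f (a.unop • x) := rfl

/-- The `k`-dual of a left `A`-module is a right `A`-module. -/
noncomputable instance dualModule : Module Aᵐᵒᵖ (V →ₗ[k] k) :=
  { dualSMul k A V with
    one_smul := fun f => by ext x; simp
    mul_smul := fun a b f => by ext x; simp [mul_smul]
    smul_zero := fun a => by ext x; simp
    smul_add := fun a f g => by ext x; simp
    add_smul := fun a b f => by ext x; simp [add_smul]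
    zero_smul := fun f => by ext x; simp }

instance dualSMulComm : SMulCommClass Aᵐᵒᵖ k (V →ₗ[k] k) :=
  ⟨fun a c f => by ext x; simp⟩

instance dualTower : IsScalarTower k Aᵐᵒᵖ (V →ₗ[k] k) :=
  ⟨fun c a f => by ext x; simp [MulOpposite.unop_smul, smul_assoc]⟩

end DualMod

/-- The indecomposable injective right module `Iᵢ = D(A eᵢ)`,
the `k`-dual of the left module `A eᵢ`. -/
abbrev IP (i : Fin n) : Type := (projL A e i) →ₗ[k] k

/-- The injective right module `I(β) = ⊕ᵢ Iᵢ^{β i}`. -/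
abbrev IM (β : Fin n → ℕ) : Type := Π i : Fin n, Fin (β i) → IP k A e i

section PostMap

variable {I J : Type} [AddCommGroup I] [Module k I] [Module Aᵐᵒᵖ I] [IsScalarTower k Aᵐᵒᵖ I]
variable [AddCommGroup J] [Module k J] [Module Aᵐᵒᵖ J] [IsScalarTower k Aᵐᵒᵖ J]

/-- The `k`-linear map `Hom_A(M, I) → Hom_A(M, J)` induced by `dc : I → J`. -/
noncomputable def postMap (dc : I →ₗ[Aᵐᵒᵖ] J) :
    (M →ₗ[Aᵐᵒᵖ] I) →ₗ[k] (M →ₗ[Aᵐᵒᵖ] J) where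
  toFun f := dc ∘ₗ f
  map_add' f g := LinearMap.comp_add _ _ _
  map_smul' c f := by
    ext x
    simp only [LinearMap.comp_apply, LinearMap.smul_apply, RingHom.id_apply]
    rw [← algebraMap_smul Aᵐᵒᵖ c (f x), LinearMap.map_smul, algebraMap_smul]

end PostMap

/-- `hom(M, δ̌)`: min of `dim_k Hom(M, ď)` over injective presentations `ď` of weight `δ̌`. -/
noncomputable def ihomWt (δc : Fin n → ℤ) : ℕ :=
  sInf {m : ℕ | ∃ (βp βm : Fin n → ℕ) (dc : IM k A e βp →ₗ[Aᵐᵒᵖ] IM k A e βm),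
    HasWt βm βp δc ∧ m = finrank k (LinearMap.ker (postMap k A M dc))}

/-- `ě(M, δ̌)`: min of `dim_k Ě(M, ď)` over injective presentations `ď` of weight `δ̌`. -/
noncomputable def ieWt (δc : Fin n → ℤ) : ℕ :=
  sInf {m : ℕ | ∃ (βp βm : Fin n → ℕ) (dc : IM k A e βp →ₗ[Aᵐᵒᵖ] IM k A e βm),
    HasWt βm βp δc ∧
      m = Module.finrank k (@HasQuotient.Quotient (M →ₗ[Aᵐᵒᵖ] IM k A e βm) _
        (@Submodule.hasQuotient k (M →ₗ[Aᵐᵒᵖ] IM k A e βm) _ _ _)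
        (LinearMap.range (postMap k A M dc)))}

/-- `e(δ, δ) = 0`: there are projective presentations `d, d'` of weight `δ` with
`E(d, Coker d') = 0`, i.e. the induced map on `Hom`s is surjective. -/
def EWtSelfZero (δ : Fin n → ℤ) : Prop :=
  ∃ (βm βp : Fin n → ℕ) (d : PP A e βm →ₗ[Aᵐᵒᵖ] PP A e βp)
    (βm' βp' : Fin n → ℕ) (d' : PP A e βm' →ₗ[Aᵐᵒᵖ] PP A e βp'),
    HasWt βm βp δ ∧ HasWt βm' βp' δ ∧
      Function.Surjective (homMap k A (Coker A e d') d)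

/-- `e₁, …, e_n` is a complete set of primitive orthogonal idempotents and `A` is basic:
the indecomposable projectives `eᵢA` are pairwise non-isomorphic. -/
def IsBasicSetup : Prop :=
  (∀ i, IsIdempotentElem (e i)) ∧
  (∀ i j, i ≠ j → e i * e j = 0) ∧
  (∑ i, e i = 1) ∧
  (∀ i, e i ≠ 0 ∧ ∀ f g : A, IsIdempotentElem f → IsIdempotentElem g →
      f * g = 0 → g * f = 0 → f + g = e i → f = 0 ∨ g = 0) ∧
  (∀ i j, i ≠ j → IsEmpty (projP A e i ≃ₗ[Aᵐᵒᵖ] projP A e j))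

end Defs

section Aux

variable (k : Type) [Field k] (A : Type) [Ring A] [Algebra k A]
variable {n : ℕ} (e : Fin n → A)
variable (M : Type) [AddCommGroup M] [Module k M] [Module Aᵐᵒᵖ M] [IsScalarTower k Aᵐᵒᵖ M]

/-- abbreviation for `M eᵢ`. -/
noncomputable abbrev MeS (i : Fin n) : Submodule k M := LinearMap.range (rmul k A e M i)

variable {M} {i : Fin n}

lemma rmul_apply (i : Fin n) (m : M) : rmul k A e M i m = op (e i) • m := rfl

lemma mem_MeS_iff (he : IsIdempotentElem (e i)) {m : M} :
    m ∈ MeS k A e M i ↔ op (e i) • m = m := by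
  constructor
  · rintro ⟨y, rfl⟩
    rw [rmul_apply, ← mul_smul, ← op_mul, he]
  · intro h; exact ⟨m, h⟩

variable {A e} in
lemma projP_mul_self (he : IsIdempotentElem (e i)) {x : A} (hx : x ∈ projP A e i) :
    e i * x = x := by
  rw [Submodule.mem_span_singleton] at hx
  obtain ⟨a, rfl⟩ := hx
  rw [MulOpposite.smul_eq_mul_unop, ← mul_assoc, he]

variable (M)

/-- The element `eᵢ ∈ eᵢA`. -/
noncomputable def epsP (i : Fin n) : projP A e i :=
  ⟨e i, Submodule.mem_span_singleton_self _⟩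

/-- `Hom(eᵢA, M) ≅ M eᵢ`. -/
noncomputable def homPEquiv (he : IsIdempotentElem (e i)) :
    (projP A e i →ₗ[Aᵐᵒᵖ] M) ≃ₗ[k] MeS k A e M i where
  toFun f := ⟨f (epsP A e i), by
    refine (mem_MeS_iff k A e he).2 ?_
    rw [← f.map_smul]
    congr 1
    exact Subtype.ext (projP_mul_self he (epsP A e i).2)⟩
  invFun m :=
    { toFun := fun x => op (x : A) • (m : M)
      map_add' := fun x y => by
        show op ((x : A) + y) • _ = _
        rw [op_add, add_smul]
      map_smul' := fun a x => by
        show op ((x : A) * a.unop) • (m : M) = a • (op (x : A) • (m : M))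
        rw [op_mul, mul_smul, op_unop] }
  map_add' f g := rfl
  map_smul' c f := rfl
  left_inv f := by
    ext x
    show op (x : A) • f (epsP A e i) = f x
    rw [← f.map_smul]
    congr 1
    exact Subtype.ext (projP_mul_self he x.2)
  right_inv m := by
    ext
    exact (mem_MeS_iff k A e he).1 m.2

variable (N : Type) [AddCommGroup N] [Module k N] [Module Aᵐᵒᵖ N] [IsScalarTower k Aᵐᵒᵖ N]

/-- `Hom(P(β), M) ≅ ∏ᵢ (M eᵢ)^{βᵢ}`. -/
noncomputable def homPPEquiv (he : ∀ i, IsIdempotentElem (e i)) (β : Fin n → ℕ) :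
    (PP A e β →ₗ[Aᵐᵒᵖ] M) ≃ₗ[k] Π i, Fin (β i) → MeS k A e M i :=
  (LinearMap.lsum Aᵐᵒᵖ (fun i => Fin (β i) → projP A e i) k).symm.trans <|
    .piCongrRight fun i =>
      (LinearMap.lsum Aᵐᵒᵖ (fun _ : Fin (β i) => projP A e i) k).symm.trans <|
        .piCongrRight fun _ => homPEquiv k A e M (he i)

lemma homPPEquiv_apply_coe (he : ∀ i, IsIdempotentElem (e i)) {β : Fin n → ℕ}
    (f : PP A e β →ₗ[Aᵐᵒᵖ] M) (i : Fin n) (j : Fin (β i)) :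
    (homPPEquiv k A e M he β f i j : M) = f (Pi.single i (Pi.single j (epsP A e i))) := rfl

/-- restriction of a module map to `M eᵢ → N eᵢ`. -/
noncomputable def rres (g : M →ₗ[Aᵐᵒᵖ] N) (i : Fin n) :
    MeS k A e M i →ₗ[k] MeS k A e N i where
  toFun m := ⟨g m, by
    obtain ⟨y, hy⟩ := m.2
    exact ⟨g y, by rw [rmul_apply, ← g.map_smul]; exact congrArg g hy⟩⟩
  map_add' x y := Subtype.ext (g.map_add _ _)
  map_smul' c x := Subtype.ext (g.map_smul_of_tower c _)

@[simp] lemma rres_apply_coe (g : M →ₗ[Aᵐᵒᵖ] N) (i : Fin n) (m : MeS k A e M i) :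
    (rres k A e M N g i m : N) = g m := rfl

lemma rres_surjective {g : M →ₗ[Aᵐᵒᵖ] N} (hg : Function.Surjective g) (i : Fin n) :
    Function.Surjective (rres k A e M N g i) := by
  rintro ⟨y, z, hz⟩
  obtain ⟨x, rfl⟩ := hg z
  exact ⟨⟨op (e i) • x, x, rfl⟩, Subtype.ext (by
    rw [rres_apply_coe, g.map_smul]; exact hz)⟩

lemma rres_injective {g : M →ₗ[Aᵐᵒᵖ] N} (hg : Function.Injective g) (i : Fin n) :
    Function.Injective (rres k A e M N g i) := fun x y hxy =>
  Subtype.ext (hg (congrArg Subtype.val hxy))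

lemma homPPEquiv_natural (he : ∀ i, IsIdempotentElem (e i)) {β : Fin n → ℕ}
    (g : M →ₗ[Aᵐᵒᵖ] N) (f : PP A e β →ₗ[Aᵐᵒᵖ] M) (i : Fin n) (j : Fin (β i)) :
    homPPEquiv k A e N he β (g ∘ₗ f) i j
      = rres k A e M N g i (homPPEquiv k A e M he β f i j) :=
  Subtype.ext (by rw [homPPEquiv_apply_coe, rres_apply_coe, homPPEquiv_apply_coe]; rfl)

include k in
/-- postcomposition with a surjection is surjective on `Hom(P(β), –)`. -/
lemma postcomp_surjective (he : ∀ i, IsIdempotentElem (e i)) {β : Fin n → ℕ}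
    {g : M →ₗ[Aᵐᵒᵖ] N} (hg : Function.Surjective g) :
    Function.Surjective (fun f : PP A e β →ₗ[Aᵐᵒᵖ] M => g ∘ₗ f) := by
  intro h
  choose t ht using fun (i : Fin n) (j : Fin (β i)) =>
    rres_surjective k A e M N hg i (homPPEquiv k A e N he β h i j)
  refine ⟨(homPPEquiv k A e M he β).symm (fun i j => t i j), ?_⟩
  apply (homPPEquiv k A e N he β).injective
  funext i j
  rw [homPPEquiv_natural, LinearEquiv.apply_symm_apply]
  exact ht i j

lemma fd_homPP [FiniteDimensional k M] (he : ∀ i, IsIdempotentElem (e i)) (β : Fin n → ℕ) :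
    FiniteDimensional k (PP A e β →ₗ[Aᵐᵒᵖ] M) :=
  LinearEquiv.finiteDimensional (homPPEquiv k A e M he β).symm

lemma finrank_homPP [FiniteDimensional k M] (he : ∀ i, IsIdempotentElem (e i)) (β : Fin n → ℕ) :
    finrank k (PP A e β →ₗ[Aᵐᵒᵖ] M) = ∑ i, β i * finrank k (MeS k A e M i) := by
  rw [(homPPEquiv k A e M he β).finrank_eq, Module.finrank_pi_fintype]
  refine Finset.sum_congr rfl fun i _ => ?_
  rw [Module.finrank_pi_fintype, Finset.sum_const, Finset.card_univ, Fintype.card_fin,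
    smul_eq_mul]

/-! ### The injective side -/

variable {A e} in
lemma projL_mul_e (he : IsIdempotentElem (e i)) {x : A} (hx : x ∈ projL A e i) :
    x * e i = x := by
  rw [Submodule.mem_span_singleton] at hx
  obtain ⟨a, rfl⟩ := hx
  rw [smul_eq_mul, mul_assoc, he]

/-- The element `eᵢ ∈ Aeᵢ`. -/
noncomputable def epsL (i : Fin n) : projL A e i :=
  ⟨e i, Submodule.mem_span_singleton_self _⟩

variable {M} in
lemma op_smul_mem_MeS {x : A} (hx : x ∈ projL A e i) (m : M) :
    op x • m ∈ MeS k A e M i := by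
  rw [Submodule.mem_span_singleton] at hx
  obtain ⟨a, rfl⟩ := hx
  rw [smul_eq_mul, op_mul, mul_smul]
  exact ⟨op a • m, rfl⟩

/-- `Hom(M, D(Aeᵢ)) ≅ D(M eᵢ)`. -/
noncomputable def homIEquiv (he : IsIdempotentElem (e i)) :
    (M →ₗ[Aᵐᵒᵖ] IP k A e i) ≃ₗ[k] (MeS k A e M i →ₗ[k] k) where
  toFun f :=
    { toFun := fun m => f (m : M) (epsL A e i)
      map_add' := fun x y => by
        simp only [Submodule.coe_add, map_add, LinearMap.add_apply]
      map_smul' := fun c x => by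
        simp only [Submodule.coe_smul, RingHom.id_apply,
          LinearMap.map_smul_of_tower, LinearMap.smul_apply] }
  invFun φ :=
    { toFun := fun m =>
        { toFun := fun x => φ ⟨op (x : A) • m, op_smul_mem_MeS k A e x.2 m⟩
          map_add' := fun x y => by
            rw [← φ.map_add]
            exact congrArg φ (Subtype.ext (show op ((x : A) + (y : A)) • m
              = op (x : A) • m + op (y : A) • m by rw [op_add, add_smul]))
          map_smul' := fun c x => by
            simp only [RingHom.id_apply]
            rw [← φ.map_smul]
            exact congrArg φ (Subtype.ext (show op (c • (x : A)) • m
              = c • (op (x : A) • m) by rw [op_smul, smul_assoc])) }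
      map_add' := fun m m' => by
        ext x
        show φ _ = φ _ + φ _
        rw [← φ.map_add]
        exact congrArg φ (Subtype.ext (smul_add (op (x : A)) m m'))
      map_smul' := fun a m => by
        ext x
        show φ ⟨op (x : A) • a • m, _⟩ = φ ⟨op (a.unop * (x : A)) • m, _⟩
        exact congrArg φ (Subtype.ext (show op (x : A) • a • m
          = op (a.unop * (x : A)) • m by rw [op_mul, mul_smul, op_unop])) }
  map_add' f g := rfl
  map_smul' c f := rfl
  left_inv f := by
    ext m x
    show f (op (x : A) • m) (epsL A e i) = f m x
    rw [f.map_smul, dual_smul_apply]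
    congr 1
    exact Subtype.ext (by
      show (x : A) • ((epsL A e i : projL A e i) : A) = (x : A)
      rw [smul_eq_mul]
      exact projL_mul_e he x.2)
  right_inv φ := by
    ext m
    show φ _ = φ m
    congr 1
    exact Subtype.ext ((mem_MeS_iff k A e he).1 m.2)

/-- `Hom(M, ∏ᵢ φᵢ) ≅ ∏ᵢ Hom(M, φᵢ)`. -/
noncomputable def homPiEquiv {ι : Type} [Fintype ι] (φ : ι → Type)
    [∀ i, AddCommGroup (φ i)] [∀ i, Module Aᵐᵒᵖ (φ i)] [∀ i, Module k (φ i)]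
    [∀ i, IsScalarTower k Aᵐᵒᵖ (φ i)] :
    (M →ₗ[Aᵐᵒᵖ] Π i, φ i) ≃ₗ[k] Π i, (M →ₗ[Aᵐᵒᵖ] φ i) where
  toFun f i := LinearMap.proj i ∘ₗ f
  invFun g := LinearMap.pi g
  map_add' f g := rfl
  map_smul' c f := rfl
  left_inv f := by ext x; rfl
  right_inv g := by ext i x; rfl

/-- `Hom(M, I(β)) ≅ ∏ᵢ D(M eᵢ)^{βᵢ}`. -/
noncomputable def homIMEquiv (he : ∀ i, IsIdempotentElem (e i)) (β : Fin n → ℕ) :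
    (M →ₗ[Aᵐᵒᵖ] IM k A e β) ≃ₗ[k] Π i, Fin (β i) → (MeS k A e M i →ₗ[k] k) :=
  (homPiEquiv k A M _).trans <|
    .piCongrRight fun i =>
      (homPiEquiv k A M _).trans <|
        .piCongrRight fun _ => homIEquiv k A e M (he i)

lemma homIMEquiv_apply (he : ∀ i, IsIdempotentElem (e i)) {β : Fin n → ℕ}
    (f : M →ₗ[Aᵐᵒᵖ] IM k A e β) (i : Fin n) (j : Fin (β i)) (m : MeS k A e M i) :
    homIMEquiv k A e M he β f i j m = f (m : M) i j (epsL A e i) := rfl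

lemma homIMEquiv_natural (he : ∀ i, IsIdempotentElem (e i)) {β : Fin n → ℕ}
    (g : N →ₗ[Aᵐᵒᵖ] M) (f : M →ₗ[Aᵐᵒᵖ] IM k A e β) (i : Fin n) (j : Fin (β i))
    (m : MeS k A e N i) :
    homIMEquiv k A e N he β (f ∘ₗ g) i j m
      = homIMEquiv k A e M he β f i j (rres k A e N M g i m) := rfl

include k in
/-- restriction along an injection is surjective on `Hom(–, I(β))`. -/
lemma precomp_surjective (he : ∀ i, IsIdempotentElem (e i)) {β : Fin n → ℕ}
    {g : N →ₗ[Aᵐᵒᵖ] M} (hg : Function.Injective g) :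
    Function.Surjective (fun f : M →ₗ[Aᵐᵒᵖ] IM k A e β => f ∘ₗ g) := by
  intro h
  have hsec : ∀ (i : Fin n) (j : Fin (β i)),
      ∃ φ : MeS k A e M i →ₗ[k] k,
        φ ∘ₗ rres k A e N M g i = homIMEquiv k A e N he β h i j := by
    intro i j
    obtain ⟨l, hl⟩ := (rres k A e N M g i).exists_leftInverse_of_injective
      (LinearMap.ker_eq_bot.2 (rres_injective k A e N M hg i))
    refine ⟨homIMEquiv k A e N he β h i j ∘ₗ l, ?_⟩
    rw [LinearMap.comp_assoc, hl, LinearMap.comp_id]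
  choose φ hφ using hsec
  refine ⟨(homIMEquiv k A e M he β).symm (fun i j => φ i j), ?_⟩
  apply (homIMEquiv k A e N he β).injective
  funext i j
  apply LinearMap.ext
  intro m
  rw [homIMEquiv_natural, LinearEquiv.apply_symm_apply, ← hφ i j]
  rfl

lemma fd_homIM [FiniteDimensional k M] (he : ∀ i, IsIdempotentElem (e i)) (β : Fin n → ℕ) :
    FiniteDimensional k (M →ₗ[Aᵐᵒᵖ] IM k A e β) :=
  LinearEquiv.finiteDimensional (homIMEquiv k A e M he β).symm

lemma finrank_homIM [FiniteDimensional k M] (he : ∀ i, IsIdempotentElem (e i)) (β : Fin n → ℕ) :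
    finrank k (M →ₗ[Aᵐᵒᵖ] IM k A e β) = ∑ i, β i * finrank k (MeS k A e M i) := by
  rw [(homIMEquiv k A e M he β).finrank_eq, Module.finrank_pi_fintype]
  refine Finset.sum_congr rfl fun i _ => ?_
  rw [Module.finrank_pi_fintype, Finset.sum_const, Finset.card_univ, Fintype.card_fin,
    smul_eq_mul, Subspace.dual_finrank_eq]

end Aux

section Generic

variable {k : Type} [Field k]
variable {V W V' W' : Type} [AddCommGroup V] [Module k V] [AddCommGroup W] [Module k W]
variable [AddCommGroup V'] [Module k V'] [AddCommGroup W'] [Module k W']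

lemma finrank_ker_sub_finrank_coker [FiniteDimensional k V] [FiniteDimensional k W]
    (T : V →ₗ[k] W) :
    (finrank k (LinearMap.ker T) : ℤ) - finrank k (W ⧸ LinearMap.range T)
      = finrank k V - finrank k W := by
  have h1 := LinearMap.finrank_range_add_finrank_ker T
  have h2 := Submodule.finrank_quotient_add_finrank (LinearMap.range T)
  omega

lemma finrank_ker_le_of_compat [FiniteDimensional k V']
    (T : V →ₗ[k] W) (T' : V' →ₗ[k] W') (ι : V →ₗ[k] V') (hι : Function.Injective ι)
    (h : ∀ v, T v = 0 → T' (ι v) = 0) :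
    finrank k (LinearMap.ker T) ≤ finrank k (LinearMap.ker T') := by
  have : Function.Injective
      ((ι ∘ₗ (LinearMap.ker T).subtype).codRestrict (LinearMap.ker T')
        (fun v => LinearMap.mem_ker.2 (h v (LinearMap.mem_ker.1 v.2)))) := by
    intro x y hxy
    exact Subtype.ext (hι (congrArg Subtype.val hxy))
  exact LinearMap.finrank_le_finrank_of_injective this

lemma finrank_coker_le_of_compat [FiniteDimensional k W]
    (T : V →ₗ[k] W) (T' : V' →ₗ[k] W') (s : W →ₗ[k] W') (hs : Function.Surjective s)
    (h : ∀ v, ∃ v', T' v' = s (T v)) :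
    finrank k (W' ⧸ LinearMap.range T') ≤ finrank k (W ⧸ LinearMap.range T) := by
  set q : W →ₗ[k] W' ⧸ LinearMap.range T' := (LinearMap.range T').mkQ ∘ₗ s with hq
  have hle : LinearMap.range T ≤ LinearMap.ker q := by
    rintro w ⟨v, rfl⟩
    obtain ⟨v', hv'⟩ := h v
    simp only [q, LinearMap.mem_ker, LinearMap.comp_apply, Submodule.mkQ_apply,
      Submodule.Quotient.mk_eq_zero]
    exact hv' ▸ LinearMap.mem_range_self T' v'
  have hsurj : Function.Surjective (Submodule.liftQ (LinearMap.range T) q hle) := by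
    intro x
    obtain ⟨w', rfl⟩ := (LinearMap.range T').mkQ_surjective x
    obtain ⟨w, rfl⟩ := hs w'
    exact ⟨Submodule.Quotient.mk w, rfl⟩
  calc finrank k (W' ⧸ LinearMap.range T')
      = finrank k (⊤ : Submodule k (W' ⧸ LinearMap.range T')) := (finrank_top k _).symm
    _ = finrank k (LinearMap.range (Submodule.liftQ (LinearMap.range T) q hle)) := by
        rw [LinearMap.range_eq_top.2 hsurj]
    _ ≤ finrank k (W ⧸ LinearMap.range T) := LinearMap.finrank_range_le _

end Generic



section Main

variable (k : Type) [Field k] (A : Type) [Ring A] [Algebra k A]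
variable {n : ℕ} (e : Fin n → A)
variable (M : Type) [AddCommGroup M] [Module k M] [Module Aᵐᵒᵖ M] [IsScalarTower k Aᵐᵒᵖ M]
variable (N : Type) [AddCommGroup N] [Module k N] [Module Aᵐᵒᵖ N] [IsScalarTower k Aᵐᵒᵖ N]

lemma pz_neg (δ β : Fin n → ℤ) : pz (-δ) β = -pz δ β := by
  unfold pz
  rw [← Finset.sum_neg_distrib]
  exact Finset.sum_congr rfl fun i _ => by simp [neg_mul]

lemma fd_submodule [FiniteDimensional k M] (L : Submodule Aᵐᵒᵖ M) :
    FiniteDimensional k L :=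
  inferInstanceAs (FiniteDimensional k (L.restrictScalars k))

lemma fd_quotient [FiniteDimensional k M] (L : Submodule Aᵐᵒᵖ M) :
    FiniteDimensional k (M ⧸ L) :=
  Module.Finite.of_surjective (LinearMap.restrictScalars k L.mkQ) L.mkQ_surjective

/-- Key identity: `hom(d, X) - e(d, X) = δ(dim X)` for a presentation of weight `δ`. -/
lemma key_proj [FiniteDimensional k M] (he : ∀ i, IsIdempotentElem (e i))
    {βm βp : Fin n → ℕ} (d : PP A e βm →ₗ[Aᵐᵒᵖ] PP A e βp) {δ : Fin n → ℤ}
    (hw : HasWt βm βp δ) :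
    (homNum k A M d : ℤ) - eNum k A M d = pz δ (dimVec k A e M) := by
  haveI := fd_homPP k A e M he βm
  haveI := fd_homPP k A e M he βp
  unfold homNum eNum
  rw [finrank_ker_sub_finrank_coker (homMap k A M d), finrank_homPP k A e M he βp,
    finrank_homPP k A e M he βm]
  unfold pz dimVec
  push_cast
  rw [← Finset.sum_sub_distrib]
  exact Finset.sum_congr rfl fun i _ => by rw [← hw i]; ring

/-- Key identity, injective version. -/
lemma key_inj [FiniteDimensional k M] (he : ∀ i, IsIdempotentElem (e i))
    {βm βp : Fin n → ℕ} (dc : IM k A e βp →ₗ[Aᵐᵒᵖ] IM k A e βm) {δc : Fin n → ℤ}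
    (hw : HasWt βm βp δc) :
    (finrank k (LinearMap.ker (postMap k A M dc)) : ℤ)
        - Module.finrank k (@HasQuotient.Quotient (M →ₗ[Aᵐᵒᵖ] IM k A e βm) _
        (@Submodule.hasQuotient k (M →ₗ[Aᵐᵒᵖ] IM k A e βm) _ _ _)
        (LinearMap.range (postMap k A M dc)))
      = pz δc (dimVec k A e M) := by
  haveI := fd_homIM k A e M he βm
  haveI := fd_homIM k A e M he βp
  rw [finrank_ker_sub_finrank_coker (postMap k A M dc), finrank_homIM k A e M he βp,
    finrank_homIM k A e M he βm]
  unfold pz dimVec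
  push_cast
  rw [← Finset.sum_sub_distrib]
  exact Finset.sum_congr rfl fun i _ => by rw [← hw i]; ring

lemma homNum_mono [FiniteDimensional k M] (he : ∀ i, IsIdempotentElem (e i))
    {βm βp : Fin n → ℕ} (d : PP A e βm →ₗ[Aᵐᵒᵖ] PP A e βp)
    {ι : N →ₗ[Aᵐᵒᵖ] M} (hι : Function.Injective ι) :
    homNum k A N d ≤ homNum k A M d := by
  haveI := fd_homPP k A e M he βp
  refine finrank_ker_le_of_compat (homMap k A N d) (homMap k A M d)
    (postMap k A (PP A e βp) ι) (fun f g hfg => ?_) (fun f hf => ?_)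
  · exact LinearMap.ext fun x => hι (LinearMap.congr_fun hfg x)
  · show (ι ∘ₗ f) ∘ₗ d = 0
    rw [LinearMap.comp_assoc]
    show ι ∘ₗ (homMap k A N d f) = 0
    rw [hf, LinearMap.comp_zero]

lemma eNum_mono [FiniteDimensional k M] (he : ∀ i, IsIdempotentElem (e i))
    {βm βp : Fin n → ℕ} (d : PP A e βm →ₗ[Aᵐᵒᵖ] PP A e βp)
    {π : M →ₗ[Aᵐᵒᵖ] N} (hπ : Function.Surjective π) :
    eNum k A N d ≤ eNum k A M d := by
  haveI := fd_homPP k A e M he βm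
  refine finrank_coker_le_of_compat (homMap k A M d) (homMap k A N d)
    (postMap k A (PP A e βm) π) (postcomp_surjective k A e M N he hπ) (fun f => ?_)
  exact ⟨π ∘ₗ f, (LinearMap.comp_assoc d f π).symm⟩

lemma ihom_mono [FiniteDimensional k M] (he : ∀ i, IsIdempotentElem (e i))
    {βm βp : Fin n → ℕ} (dc : IM k A e βp →ₗ[Aᵐᵒᵖ] IM k A e βm)
    {π : M →ₗ[Aᵐᵒᵖ] N} (hπ : Function.Surjective π) :
    finrank k (LinearMap.ker (postMap k A N dc))
      ≤ finrank k (LinearMap.ker (postMap k A M dc)) := by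
  haveI := fd_homIM k A e M he βp
  refine finrank_ker_le_of_compat (postMap k A N dc) (postMap k A M dc)
    (homMap k A (IM k A e βp) π) (fun f g hfg => ?_) (fun f hf => ?_)
  · refine LinearMap.ext fun x => ?_
    obtain ⟨y, rfl⟩ := hπ x
    exact LinearMap.congr_fun hfg y
  · show dc ∘ₗ (f ∘ₗ π) = 0
    rw [← LinearMap.comp_assoc]
    show (postMap k A N dc f) ∘ₗ π = 0
    rw [hf, LinearMap.zero_comp]

lemma ie_mono [FiniteDimensional k M] (he : ∀ i, IsIdempotentElem (e i))
    {βm βp : Fin n → ℕ} (dc : IM k A e βp →ₗ[Aᵐᵒᵖ] IM k A e βm)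
    {ι : N →ₗ[Aᵐᵒᵖ] M} (hι : Function.Injective ι) :
    Module.finrank k (@HasQuotient.Quotient (N →ₗ[Aᵐᵒᵖ] IM k A e βm) _
        (@Submodule.hasQuotient k (N →ₗ[Aᵐᵒᵖ] IM k A e βm) _ _ _)
        (LinearMap.range (postMap k A N dc)))
      ≤ Module.finrank k (@HasQuotient.Quotient (M →ₗ[Aᵐᵒᵖ] IM k A e βm) _
        (@Submodule.hasQuotient k (M →ₗ[Aᵐᵒᵖ] IM k A e βm) _ _ _)
        (LinearMap.range (postMap k A M dc))) := by
  haveI := fd_homIM k A e M he βm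
  refine finrank_coker_le_of_compat (postMap k A M dc) (postMap k A N dc)
    (homMap k A (IM k A e βm) ι) (precomp_surjective k A e M N he hι) (fun f => ?_)
  exact ⟨f ∘ₗ ι, LinearMap.comp_assoc ι f dc⟩

end Main

end TropGP

open TropGP Module MulOpposite

set_option maxHeartbeats 2000000

/-- For every finite-dimensional right `A`-module `M` and every weight
`δ ∈ ℤⁿ`: `f_M(δ) ≤ hom(δ,M)` and `f̌_M(−δ) ≤ e(δ,M)`; dually, for every `δ̌ ∈ ℤⁿ`:
`f̌_M(δ̌) ≤ hom(M,δ̌)` and `f_M(−δ̌) ≤ ě(M,δ̌)`. -/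
theorem statement0 (k : Type) [Field k] [IsAlgClosed k] [CharZero k]
    (A : Type) [Ring A] [Algebra k A] [FiniteDimensional k A]
    {n : ℕ} (e : Fin n → A) (hA : IsBasicSetup A e)
    (M : Type) [AddCommGroup M] [Module k M] [Module Aᵐᵒᵖ M]
    [IsScalarTower k Aᵐᵒᵖ M] [FiniteDimensional k M] :
    (∀ δ : Fin n → ℤ,
      tropF k A e M δ ≤ (homWt k A e M δ : ℤ) ∧
      tropCheck k A e M (-δ) ≤ (eWt k A e M δ : ℤ)) ∧
    (∀ δc : Fin n → ℤ,
      tropCheck k A e M δc ≤ (ihomWt k A e M δc : ℤ) ∧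
      tropF k A e M (-δc) ≤ (ieWt k A e M δc : ℤ)) := by
  obtain ⟨he, -⟩ := hA
  constructor
  · intro δ
    have hwex : HasWt (fun i => (-δ i).toNat) (fun i => (δ i).toNat) δ := fun i => by
      simp only []
      omega
    constructor
    · have hne : {m : ℕ | ∃ (βm βp : Fin n → ℕ) (d : PP A e βm →ₗ[Aᵐᵒᵖ] PP A e βp),
          HasWt βm βp δ ∧ m = homNum k A M d}.Nonempty :=
        ⟨_, _, _, 0, hwex, rfl⟩
      obtain ⟨βm', βp', d, hw, hval⟩ := Nat.sInf_mem hne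
      have hval' : homWt k A e M δ = homNum k A M d := hval
      unfold tropF
      refine csSup_le (Set.range_nonempty _) ?_
      rintro x ⟨L, rfl⟩
      simp only []
      haveI := fd_submodule k A M L
      have h1 := key_proj k A e L he d hw
      have h2 := homNum_mono k A e M L he d L.injective_subtype
      omega
    · have hne : {m : ℕ | ∃ (βm βp : Fin n → ℕ) (d : PP A e βm →ₗ[Aᵐᵒᵖ] PP A e βp),
          HasWt βm βp δ ∧ m = eNum k A M d}.Nonempty :=
        ⟨_, _, _, 0, hwex, rfl⟩
      obtain ⟨βm', βp', d, hw, hval⟩ := Nat.sInf_mem hne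
      have hval' : eWt k A e M δ = eNum k A M d := hval
      unfold tropCheck
      refine csSup_le (Set.range_nonempty _) ?_
      rintro x ⟨L, rfl⟩
      simp only []
      haveI := fd_quotient k A M L
      have h1 := key_proj k A e (M ⧸ L) he d hw
      have h2 := eNum_mono k A e M (M ⧸ L) he d L.mkQ_surjective
      have h3 := pz_neg δ (dimVec k A e (M ⧸ L))
      omega
  · intro δc
    have hwex : HasWt (fun i => (-δc i).toNat) (fun i => (δc i).toNat) δc := fun i => by
      simp only []
      omega
    constructor
    · have hne : {m : ℕ | ∃ (βp βm : Fin n → ℕ) (dc : IM k A e βp →ₗ[Aᵐᵒᵖ] IM k A e βm),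
          HasWt βm βp δc ∧ m = finrank k (LinearMap.ker (postMap k A M dc))}.Nonempty :=
        ⟨_, _, _, 0, hwex, rfl⟩
      obtain ⟨βp', βm', dc, hw, hval⟩ := Nat.sInf_mem hne
      have hval' : ihomWt k A e M δc = finrank k (LinearMap.ker (postMap k A M dc)) := hval
      unfold tropCheck
      refine csSup_le (Set.range_nonempty _) ?_
      rintro x ⟨L, rfl⟩
      simp only []
      haveI := fd_quotient k A M L
      have h1 := key_inj k A e (M ⧸ L) he dc hw
      have h2 := ihom_mono k A e M (M ⧸ L) he dc L.mkQ_surjective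
      omega
    · have hne : {m : ℕ | ∃ (βp βm : Fin n → ℕ) (dc : IM k A e βp →ₗ[Aᵐᵒᵖ] IM k A e βm),
          HasWt βm βp δc ∧
            m = Module.finrank k (@HasQuotient.Quotient (M →ₗ[Aᵐᵒᵖ] IM k A e βm) _
        (@Submodule.hasQuotient k (M →ₗ[Aᵐᵒᵖ] IM k A e βm) _ _ _)
        (LinearMap.range (postMap k A M dc)))}.Nonempty :=
        ⟨_, _, _, 0, hwex, rfl⟩
      obtain ⟨βp', βm', dc, hw, hval⟩ := Nat.sInf_mem hne
      have hval' : ieWt k A e M δc = Module.finrank k (@HasQuotient.Quotient (M →ₗ[Aᵐᵒᵖ] IM k A e βm') _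
        (@Submodule.hasQuotient k (M →ₗ[Aᵐᵒᵖ] IM k A e βm') _ _ _)
        (LinearMap.range (postMap k A M dc))) := hval
      unfold tropF
      refine csSup_le (Set.range_nonempty _) ?_
      rintro x ⟨L, rfl⟩
      simp only []
      haveI := fd_submodule k A M L
      have h1 := key_inj k A e L he dc hw
      have h2 := ie_mono k A e M L he dc L.injective_subtype
      have h3 := pz_neg δc (dimVec k A e L)
      omega
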